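/- Define Dave's projectors on ℂ^d_D ⊗ (ℂ²_{v₁}⊗ℂ²_{v₂}⊗ℂ²_{v₃}): M₅,₁ = P_D{1,…,d−1}⊗|1⟩⟨1|_{v₁}⊗|1⟩⟨1|_{v₂}⊗|0⟩⟨0|_{v₃}; M₅,₂ = P_D{1,…,d−1}⊗|1⟩⟨1|_{v₁}⊗|0⟩⟨0|_{v₂}⊗|1⟩⟨1|_{v₃}; M₅,₃ = |0⟩⟨0|_D⊗I_{v₁}⊗I_{v₂}⊗|1⟩⟨1|_{v₃}; M₅,₄ = |0⟩⟨0|_D⊗I_{v₁}⊗|1⟩⟨1|_{v₂}⊗|0⟩⟨0|_{v₃}; M₅,₅ = I − M₅,₁ − M₅,₂ − M₅,₃ − M₅,₄, where P_D{1,…,d−1} = Σ_{k=1}^{d−1}|k⟩⟨k|_D. Then, tensored with the identity on all other factors and restricted to post-measurement states arising from the six subsets H₁, H₂, H₅, H₇, H₈, H₁₀: M₅,₁ acts as the identity on every post-measurement state arising from H₁₀; M₅,₂ on those from H₈; M₅,₃ on those from H₁; M₅,₄ on those from H₂; and M₅,₅ on those from H₅ and from H₇. (Step 3 of the proof of Theorem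 9: Dave's measurement identifies H₁₀, H₈, H₁, H₂.) -/

import Mathlib

noncomputable section

/-- View a coefficient function as a vector of the Euclidean (Hilbert) space. -/
def ofFun {ι : Type*} [Fintype ι] (f : ι → ℂ) : EuclideanSpace ℂ ι := WithLp.toLp 2 f

/-- Transport an endomorphism of the coefficient functions to the Euclidean space. -/
def toE {ι : Type*} [Fintype ι] (T : (ι → ℂ) →ₗ[ℂ] (ι → ℂ)) :
    Module.End ℂ (EuclideanSpace ℂ ι) :=
  (WithLp.linearEquiv 2 ℂ (ι → ℂ)).symm.toLinearMap ∘ₗ T ∘ₗ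
    (WithLp.linearEquiv 2 ℂ (ι → ℂ)).toLinearMap

open Classical in
/-- Diagonal orthogonal projection keeping exactly the basis vectors whose index
satisfies `f`. -/
def diagP {ι : Type*} [Fintype ι] (f : ι → Prop) : Module.End ℂ (EuclideanSpace ℂ ι) :=
  toE (LinearMap.pi fun i => (if f i then (1 : ℂ) else 0) • LinearMap.proj i)

/-- Tensor product of two vectors, realized on the product index set. -/
def tensE {ι κ : Type*} [Fintype ι] [Fintype κ]
    (u : EuclideanSpace ℂ ι) (w : EuclideanSpace ℂ κ) : EuclideanSpace ℂ (ι × κ) :=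
  ofFun fun p => u p.1 * w p.2

/-- The root of unity `ω_n = e^{2πi/n}`. -/
def omegaC (n : ℕ) : ℂ := Complex.exp (2 * Real.pi * Complex.I / n)

/-- Computational basis vector `|k⟩` of `ℂ^d`. -/
def ketD (d k : ℕ) : EuclideanSpace ℂ (Fin d) :=
  ofFun fun u => if (u : ℕ) = k then 1 else 0

/-- The (unnormalized) vector `|α_i⟩ = Σ_{u=0}^{d−1} ω_d^{iu}|u⟩`. -/
def alphaD (d i : ℕ) : EuclideanSpace ℂ (Fin d) :=
  ofFun fun u => omegaC d ^ (i * (u : ℕ))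

/-- The (unnormalized) vector `|γ_m⟩ = Σ_{u=0}^{d−2} ω_{d−1}^{mu}|u+1⟩`. -/
def gammaD (d m : ℕ) : EuclideanSpace ℂ (Fin d) :=
  ofFun fun u => if (u : ℕ) = 0 then 0 else omegaC (d - 1) ^ (m * ((u : ℕ) - 1))

/-- Tensor product of five vectors of `ℂ^d`, realized on the index set `Fin 5 → Fin d`. -/
def tp5 {d : ℕ} (v0 v1 v2 v3 v4 : EuclideanSpace ℂ (Fin d)) :
    EuclideanSpace ℂ (Fin 5 → Fin d) :=
  ofFun fun x => v0 (x 0) * v1 (x 1) * v2 (x 2) * v3 (x 3) * v4 (x 4)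

/-- The states of set (5): family `k : Fin 10` corresponds to `H_{k+1}`; the parameter
`a` is the spectral parameter (`i ∈ ℤ_d` for `H₁,…,H₅`, `m ∈ ℤ_{d−1}` for `H₆,…,H₁₀`),
and `p` is the index of the computational basis vector `|p⟩ ∈ {|1⟩,…,|d−1⟩}`. -/
def stateOf (d : ℕ) (k : Fin 10) (a p : ℕ) : EuclideanSpace ℂ (Fin 5 → Fin d) :=
  if k = 0 then tp5 (alphaD d a) (alphaD d a) (ketD d p) (ketD d 0) (ketD d 0)
  else if k = 1 then tp5 (alphaD d a) (ketD d p) (ketD d 0) (ketD d 0) (alphaD d a)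
  else if k = 2 then tp5 (ketD d p) (ketD d 0) (ketD d 0) (alphaD d a) (alphaD d a)
  else if k = 3 then tp5 (ketD d 0) (ketD d 0) (alphaD d a) (alphaD d a) (ketD d p)
  else if k = 4 then tp5 (ketD d 0) (alphaD d a) (alphaD d a) (ketD d p) (ketD d 0)
  else if k = 5 then tp5 (gammaD d a) (ketD d 0) (ketD d p) (ketD d 0) (ketD d 1)
  else if k = 6 then tp5 (ketD d 0) (ketD d p) (ketD d 0) (ketD d 1) (gammaD d a)
  else if k = 7 then tp5 (ketD d p) (ketD d 0) (ketD d 1) (gammaD d a) (ketD d 0)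
  else if k = 8 then tp5 (ketD d 0) (ketD d 1) (gammaD d a) (ketD d 0) (ketD d p)
  else tp5 (ketD d 1) (gammaD d a) (ketD d 0) (ketD d p) (ketD d 0)

/-- Ranges of the parameters of the states of set (5). -/
def validIdx (d : ℕ) (k : Fin 10) (a p : ℕ) : Prop :=
  (if (k : ℕ) < 5 then a < d else a < d - 1) ∧ 1 ≤ p ∧ p < d

/-- The full Hilbert space: five `ℂ^d` subsystems `A,B,C,D,E` (positions `0,…,4`),
ancilla qubits `a,b,c` (first `Fin 3 → Fin 2` factor, attached to `A,B,C`),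
ancilla qubits `v₁,v₂,v₃` (second factor, held by Dave),
and ancilla qubits `e₁,e₂,e₃` (third factor, held by Eve). -/
abbrev W3 (d : ℕ) : Type :=
  EuclideanSpace ℂ
    ((Fin 5 → Fin d) × ((Fin 3 → Fin 2) × (Fin 3 → Fin 2) × (Fin 3 → Fin 2)))

/-- The ancilla state `|G⟩_{av₁e₁} ⊗ |G⟩_{bv₂e₂} ⊗ |G⟩_{cv₃e₃}`, where
`|G⟩ = (|000⟩+|111⟩)/√2`. -/
def ancG : EuclideanSpace ℂ ((Fin 3 → Fin 2) × (Fin 3 → Fin 2) × (Fin 3 → Fin 2)) :=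
  ofFun fun q =>
    ∏ k : Fin 3,
      (if q.1 k = q.2.1 k ∧ q.2.1 k = q.2.2 k then (Real.sqrt 2 : ℂ)⁻¹ else 0)

/-- The measurement projector
`Q_{Xx} = |0⟩⟨0|_X ⊗ |0⟩⟨0|_x + (Σ_{k=1}^{d−1}|k⟩⟨k|_X) ⊗ |1⟩⟨1|_x`
on the main subsystem at position `X` and its ancilla qubit at position `j`. -/
def QprojG (d : ℕ) (X : Fin 5) (j : Fin 3) : Module.End ℂ (W3 d) :=
  diagP fun q => ((q.1 X : ℕ) = 0 ∧ q.2.1 j = 0) ∨ ((q.1 X : ℕ) ≠ 0 ∧ q.2.1 j = 1)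

/-- The post-measurement state
`(Q_{Aa}Q_{Bb}Q_{Cc})(|h⟩ ⊗ |G⟩_{av₁e₁} ⊗ |G⟩_{bv₂e₂} ⊗ |G⟩_{cv₃e₃})`. -/
def postG (d : ℕ) (h : EuclideanSpace ℂ (Fin 5 → Fin d)) : W3 d :=
  (QprojG d 0 0 * QprojG d 1 1 * QprojG d 2 2) (tensE h ancG)

/-- Dave's projector `M₅,₁ = P_D{1,…,d−1} ⊗ |1⟩⟨1|_{v₁} ⊗ |1⟩⟨1|_{v₂} ⊗ |0⟩⟨0|_{v₃}`. -/
def daveM51 (d : ℕ) : Module.End ℂ (W3 d) :=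
  diagP fun q => (q.1 3 : ℕ) ≠ 0 ∧ q.2.2.1 0 = 1 ∧ q.2.2.1 1 = 1 ∧ q.2.2.1 2 = 0

/-- Dave's projector `M₅,₂ = P_D{1,…,d−1} ⊗ |1⟩⟨1|_{v₁} ⊗ |0⟩⟨0|_{v₂} ⊗ |1⟩⟨1|_{v₃}`. -/
def daveM52 (d : ℕ) : Module.End ℂ (W3 d) :=
  diagP fun q => (q.1 3 : ℕ) ≠ 0 ∧ q.2.2.1 0 = 1 ∧ q.2.2.1 1 = 0 ∧ q.2.2.1 2 = 1

/-- Dave's projector `M₅,₃ = |0⟩⟨0|_D ⊗ I_{v₁} ⊗ I_{v₂} ⊗ |1⟩⟨1|_{v₃}`. -/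
def daveM53 (d : ℕ) : Module.End ℂ (W3 d) :=
  diagP fun q => (q.1 3 : ℕ) = 0 ∧ q.2.2.1 2 = 1

/-- Dave's projector `M₅,₄ = |0⟩⟨0|_D ⊗ I_{v₁} ⊗ |1⟩⟨1|_{v₂} ⊗ |0⟩⟨0|_{v₃}`. -/
def daveM54 (d : ℕ) : Module.End ℂ (W3 d) :=
  diagP fun q => (q.1 3 : ℕ) = 0 ∧ q.2.2.1 1 = 1 ∧ q.2.2.1 2 = 0

/-- Dave's projector `M₅,₅ = I − M₅,₁ − M₅,₂ − M₅,₃ − M₅,₄`. -/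
def daveM55 (d : ℕ) : Module.End ℂ (W3 d) :=
  1 - daveM51 d - daveM52 d - daveM53 d - daveM54 d


open Classical in
lemma diagP_apply {ι : Type*} [Fintype ι] (f : ι → Prop) (v : EuclideanSpace ℂ ι) (i : ι) :
    diagP f v i = if f i then v i else 0 := by
  show (if f i then (1:ℂ) else 0) • v i = _
  split <;> simp

lemma diagP_eq_self {ι : Type*} [Fintype ι] (f : ι → Prop) (v : EuclideanSpace ℂ ι)
    (h : ∀ i, v i ≠ 0 → f i) : diagP f v = v := by
  ext i
  rw [diagP_apply]
  by_cases hf : f i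
  · simp [hf]
  · simp only [hf, if_false]
    by_contra hv
    exact hf (h i fun e => hv e.symm)

lemma diagP_eq_zero {ι : Type*} [Fintype ι] (f : ι → Prop) (v : EuclideanSpace ℂ ι)
    (h : ∀ i, v i ≠ 0 → ¬ f i) : diagP f v = 0 := by
  ext i
  rw [diagP_apply]
  by_cases hf : f i
  · by_cases hv : v i = 0
    · simp [hf, hv]
    · exact absurd hf (h i hv)
  · simp [hf]

lemma ketD_support {d k : ℕ} {u : Fin d} (h : ketD d k u ≠ 0) : (u : ℕ) = k := by
  by_contra hc
  exact h (by simp [ketD, ofFun, hc])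

lemma gammaD_support {d m : ℕ} {u : Fin d} (h : gammaD d m u ≠ 0) : (u : ℕ) ≠ 0 := by
  intro hc
  exact h (by simp [gammaD, ofFun, hc])

lemma postG_support {d : ℕ} (v0 v1 v2 v3 v4 : EuclideanSpace ℂ (Fin d))
    (q : (Fin 5 → Fin d) × ((Fin 3 → Fin 2) × (Fin 3 → Fin 2) × (Fin 3 → Fin 2)))
    (hq : postG d (tp5 v0 v1 v2 v3 v4) q ≠ 0) :
    (v0 (q.1 0) ≠ 0 ∧ v1 (q.1 1) ≠ 0 ∧ v2 (q.1 2) ≠ 0 ∧ v3 (q.1 3) ≠ 0 ∧ v4 (q.1 4) ≠ 0)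
    ∧ (∀ k : Fin 3, q.2.2.1 k = q.2.1 k)
    ∧ (((q.1 0 : ℕ) = 0 ∧ q.2.1 0 = 0) ∨ ((q.1 0 : ℕ) ≠ 0 ∧ q.2.1 0 = 1))
    ∧ (((q.1 1 : ℕ) = 0 ∧ q.2.1 1 = 0) ∨ ((q.1 1 : ℕ) ≠ 0 ∧ q.2.1 1 = 1))
    ∧ (((q.1 2 : ℕ) = 0 ∧ q.2.1 2 = 0) ∨ ((q.1 2 : ℕ) ≠ 0 ∧ q.2.1 2 = 1)) := by
  simp only [postG, QprojG, Module.End.mul_apply, diagP_apply] at hq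
  split_ifs at hq with h0 h1 h2
  · simp only [tensE, tp5, ofFun, PiLp.toLp_apply, ancG, ne_eq, mul_eq_zero, not_or] at hq
    obtain ⟨⟨⟨⟨⟨h0', h1'⟩, h2'⟩, h3'⟩, h4'⟩, hg⟩ := hq
    refine ⟨⟨h0', h1', h2', h3', h4'⟩, ?_, h0, h1, h2⟩
    intro k
    have := Finset.prod_ne_zero_iff.mp hg k (Finset.mem_univ k)
    by_contra hc
    apply this
    rw [if_neg]
    intro ⟨e1, e2⟩
    exact hc (e1.symm)
  all_goals simp at hq

lemma M51_case (d : ℕ) (a p : ℕ) (hv : validIdx d 9 a p) :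
    daveM51 d (postG d (stateOf d 9 a p)) = postG d (stateOf d 9 a p) := by
  obtain ⟨-, hp1, -⟩ := hv
  have hs : stateOf d 9 a p =
      tp5 (ketD d 1) (gammaD d a) (ketD d 0) (ketD d p) (ketD d 0) := by
    simp [stateOf]
  rw [hs, daveM51]
  apply diagP_eq_self
  intro q hq
  obtain ⟨⟨h0, h1, h2, h3, -⟩, hvE, hQ0, hQ1, hQ2⟩ := postG_support _ _ _ _ _ q hq
  have e0 : (q.1 0 : ℕ) = 1 := ketD_support h0
  have e1 : (q.1 1 : ℕ) ≠ 0 := gammaD_support h1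
  have e2 : (q.1 2 : ℕ) = 0 := ketD_support h2
  have e3 : (q.1 3 : ℕ) = p := ketD_support h3
  refine ⟨by omega, ?_, ?_, ?_⟩
  · rw [hvE 0]; rcases hQ0 with ⟨h, -⟩ | ⟨-, h⟩; · exact absurd h (by omega)
    exact h
  · rw [hvE 1]; rcases hQ1 with ⟨h, -⟩ | ⟨-, h⟩; · exact absurd h e1
    exact h
  · rw [hvE 2]; rcases hQ2 with ⟨-, h⟩ | ⟨h, -⟩; · exact h
    exact absurd e2 h

lemma M52_case (d : ℕ) (a p : ℕ) (hv : validIdx d 7 a p) :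
    daveM52 d (postG d (stateOf d 7 a p)) = postG d (stateOf d 7 a p) := by
  obtain ⟨-, hp1, -⟩ := hv
  have hs : stateOf d 7 a p =
      tp5 (ketD d p) (ketD d 0) (ketD d 1) (gammaD d a) (ketD d 0) := by
    simp [stateOf]
  rw [hs, daveM52]
  apply diagP_eq_self
  intro q hq
  obtain ⟨⟨h0, h1, h2, h3, -⟩, hvE, hQ0, hQ1, hQ2⟩ := postG_support _ _ _ _ _ q hq
  have e0 : (q.1 0 : ℕ) = p := ketD_support h0
  have e1 : (q.1 1 : ℕ) = 0 := ketD_support h1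
  have e2 : (q.1 2 : ℕ) = 1 := ketD_support h2
  have e3 : (q.1 3 : ℕ) ≠ 0 := gammaD_support h3
  refine ⟨e3, ?_, ?_, ?_⟩
  · rw [hvE 0]; rcases hQ0 with ⟨h, -⟩ | ⟨-, h⟩; · exact absurd h (by omega)
    exact h
  · rw [hvE 1]; rcases hQ1 with ⟨-, h⟩ | ⟨h, -⟩; · exact h
    exact absurd e1 h
  · rw [hvE 2]; rcases hQ2 with ⟨h, -⟩ | ⟨-, h⟩; · exact absurd h (by omega)
    exact h

lemma M53_case (d : ℕ) (a p : ℕ) (hv : validIdx d 0 a p) :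
    daveM53 d (postG d (stateOf d 0 a p)) = postG d (stateOf d 0 a p) := by
  obtain ⟨-, hp1, -⟩ := hv
  have hs : stateOf d 0 a p =
      tp5 (alphaD d a) (alphaD d a) (ketD d p) (ketD d 0) (ketD d 0) := by
    simp [stateOf]
  rw [hs, daveM53]
  apply diagP_eq_self
  intro q hq
  obtain ⟨⟨-, -, h2, h3, -⟩, hvE, -, -, hQ2⟩ := postG_support _ _ _ _ _ q hq
  have e2 : (q.1 2 : ℕ) = p := ketD_support h2
  have e3 : (q.1 3 : ℕ) = 0 := ketD_support h3
  refine ⟨e3, ?_⟩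
  rw [hvE 2]; rcases hQ2 with ⟨h, -⟩ | ⟨-, h⟩; · exact absurd h (by omega)
  exact h

lemma M54_case (d : ℕ) (a p : ℕ) (hv : validIdx d 1 a p) :
    daveM54 d (postG d (stateOf d 1 a p)) = postG d (stateOf d 1 a p) := by
  obtain ⟨-, hp1, -⟩ := hv
  have hs : stateOf d 1 a p =
      tp5 (alphaD d a) (ketD d p) (ketD d 0) (ketD d 0) (alphaD d a) := by
    simp [stateOf]
  rw [hs, daveM54]
  apply diagP_eq_self
  intro q hq
  obtain ⟨⟨-, h1, h2, h3, -⟩, hvE, -, hQ1, hQ2⟩ := postG_support _ _ _ _ _ q hq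
  have e1 : (q.1 1 : ℕ) = p := ketD_support h1
  have e2 : (q.1 2 : ℕ) = 0 := ketD_support h2
  have e3 : (q.1 3 : ℕ) = 0 := ketD_support h3
  refine ⟨e3, ?_, ?_⟩
  · rw [hvE 1]; rcases hQ1 with ⟨h, -⟩ | ⟨-, h⟩; · exact absurd h (by omega)
    exact h
  · rw [hvE 2]; rcases hQ2 with ⟨-, h⟩ | ⟨h, -⟩; · exact h
    exact absurd e2 h

lemma M55_of_zero (d : ℕ) (v : W3 d)
    (z1 : daveM51 d v = 0) (z2 : daveM52 d v = 0)
    (z3 : daveM53 d v = 0) (z4 : daveM54 d v = 0) :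
    daveM55 d v = v := by
  simp [daveM55, LinearMap.sub_apply, z1, z2, z3, z4]

lemma M55_case4 (d : ℕ) (a p : ℕ) (hv : validIdx d 4 a p) :
    daveM55 d (postG d (stateOf d 4 a p)) = postG d (stateOf d 4 a p) := by
  obtain ⟨-, hp1, -⟩ := hv
  have hs : stateOf d 4 a p =
      tp5 (ketD d 0) (alphaD d a) (alphaD d a) (ketD d p) (ketD d 0) := by
    simp [stateOf]
  rw [hs]
  have key : ∀ q, postG d (tp5 (ketD d 0) (alphaD d a) (alphaD d a) (ketD d p) (ketD d 0)) q ≠ 0 →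
      (q.1 3 : ℕ) ≠ 0 ∧ q.2.2.1 0 = 0 := by
    intro q hq
    obtain ⟨⟨h0, -, -, h3, -⟩, hvE, hQ0, -, -⟩ := postG_support _ _ _ _ _ q hq
    have e0 : (q.1 0 : ℕ) = 0 := ketD_support h0
    have e3 : (q.1 3 : ℕ) = p := ketD_support h3
    refine ⟨by omega, ?_⟩
    rw [hvE 0]; rcases hQ0 with ⟨-, h⟩ | ⟨h, -⟩; · exact h
    exact absurd e0 h
  refine M55_of_zero d _ ?_ ?_ ?_ ?_
  · rw [daveM51]; apply diagP_eq_zero; intro q hq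
    rintro ⟨-, c2, -⟩; rw [(key q hq).2] at c2; exact absurd c2 (by decide)
  · rw [daveM52]; apply diagP_eq_zero; intro q hq
    rintro ⟨-, c2, -⟩; rw [(key q hq).2] at c2; exact absurd c2 (by decide)
  · rw [daveM53]; apply diagP_eq_zero; intro q hq
    rintro ⟨c1, -⟩; exact (key q hq).1 c1
  · rw [daveM54]; apply diagP_eq_zero; intro q hq
    rintro ⟨c1, -⟩; exact (key q hq).1 c1

lemma M55_case6 (d : ℕ) (a p : ℕ) (hv : validIdx d 6 a p) :
    daveM55 d (postG d (stateOf d 6 a p)) = postG d (stateOf d 6 a p) := by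
  obtain ⟨-, hp1, -⟩ := hv
  have hs : stateOf d 6 a p =
      tp5 (ketD d 0) (ketD d p) (ketD d 0) (ketD d 1) (gammaD d a) := by
    simp [stateOf]
  rw [hs]
  have key : ∀ q, postG d (tp5 (ketD d 0) (ketD d p) (ketD d 0) (ketD d 1) (gammaD d a)) q ≠ 0 →
      (q.1 3 : ℕ) ≠ 0 ∧ q.2.2.1 0 = 0 := by
    intro q hq
    obtain ⟨⟨h0, -, -, h3, -⟩, hvE, hQ0, -, -⟩ := postG_support _ _ _ _ _ q hq
    have e0 : (q.1 0 : ℕ) = 0 := ketD_support h0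
    have e3 : (q.1 3 : ℕ) = 1 := ketD_support h3
    refine ⟨by omega, ?_⟩
    rw [hvE 0]; rcases hQ0 with ⟨-, h⟩ | ⟨h, -⟩; · exact h
    exact absurd e0 h
  refine M55_of_zero d _ ?_ ?_ ?_ ?_
  · rw [daveM51]; apply diagP_eq_zero; intro q hq
    rintro ⟨-, c2, -⟩; rw [(key q hq).2] at c2; exact absurd c2 (by decide)
  · rw [daveM52]; apply diagP_eq_zero; intro q hq
    rintro ⟨-, c2, -⟩; rw [(key q hq).2] at c2; exact absurd c2 (by decide)
  · rw [daveM53]; apply diagP_eq_zero; intro q hq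
    rintro ⟨c1, -⟩; exact (key q hq).1 c1
  · rw [daveM54]; apply diagP_eq_zero; intro q hq
    rintro ⟨c1, -⟩; exact (key q hq).1 c1

/-- Step 3 of Theorem 9: restricted to the post-measurement states
arising from `H₁, H₂, H₅, H₇, H₈, H₁₀`: `M₅,₁` acts as the identity on those from
`H₁₀`; `M₅,₂` on those from `H₈`; `M₅,₃` on those from `H₁`; `M₅,₄` on those from
`H₂`; and `M₅,₅` on those from `H₅` and from `H₇`. -/
theorem thm9_step3_dave_measurement (d : ℕ) (hd : 3 ≤ d) :
    (∀ a p, validIdx d 9 a p →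
      daveM51 d (postG d (stateOf d 9 a p)) = postG d (stateOf d 9 a p)) ∧
    (∀ a p, validIdx d 7 a p →
      daveM52 d (postG d (stateOf d 7 a p)) = postG d (stateOf d 7 a p)) ∧
    (∀ a p, validIdx d 0 a p →
      daveM53 d (postG d (stateOf d 0 a p)) = postG d (stateOf d 0 a p)) ∧
    (∀ a p, validIdx d 1 a p →
      daveM54 d (postG d (stateOf d 1 a p)) = postG d (stateOf d 1 a p)) ∧
    (∀ k : Fin 10, k ∈ ({4, 6} : Set (Fin 10)) → ∀ a p, validIdx d k a p →
      daveM55 d (postG d (stateOf d k a p)) = postG d (stateOf d k a p)) := by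

  refine ⟨fun a p hv => M51_case d a p hv, fun a p hv => M52_case d a p hv,
    fun a p hv => M53_case d a p hv, fun a p hv => M54_case d a p hv, ?_⟩
  intro k hk a p hv
  rcases hk with rfl | hk
  · exact M55_case4 d a p hv
  · rw [Set.mem_singleton_iff] at hk
    subst hk
    exact M55_case6 d a p hv
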